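/- Let 𝔐 = (V,⟨·,·⟩,A) be a spacelike Osserman model of neutral signature (2,2). Then for every positive integer j there is a constant c_j such that Tr((J_A(v))^j) = c_j · ⟨v,v⟩^j for every vector v ∈ V. In particular Tr((J_A(v))^j) = 0 for every null v. -/

import Mathlib

open Matrix BigOperators

/-- `V = ℝ⁴`. -/
abbrev V4 : Type := Fin 4 → ℝ

/-- The neutral inner product of signature (2,2):
`⟨x,y⟩ = −x₁y₁ − x₂y₂ + x₃y₃ + x₄y₄`. -/
def nip (x y : V4) : ℝ := -(x 0 * y 0) - x 1 * y 1 + x 2 * y 2 + x 3 * y 3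

/-- The signs `ε₁ = ε₂ = −1`, `ε₃ = ε₄ = 1`. -/
def eps : Fin 4 → ℝ := ![-1, -1, 1, 1]

/-- The standard basis vectors `e i`. -/
def stdb (i : Fin 4) : V4 := fun j => if j = i then 1 else 0

/-- A 4-linear map `A : V⁴ → ℝ` (linearity in each slot). -/
def IsMultilinear (A : V4 → V4 → V4 → V4 → ℝ) : Prop :=
  (∀ (c : ℝ) (x x' y z w : V4), A (c • x + x') y z w = c * A x y z w + A x' y z w) ∧
  (∀ (c : ℝ) (x y y' z w : V4), A x (c • y + y') z w = c * A x y z w + A x y' z w) ∧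
  (∀ (c : ℝ) (x y z z' w : V4), A x y (c • z + z') w = c * A x y z w + A x y z' w) ∧
  (∀ (c : ℝ) (x y z w w' : V4), A x y z (c • w + w') = c * A x y z w + A x y z w')

/-- Curvature symmetries:
`A(x,y,z,v) = −A(y,x,z,v) = A(z,v,x,y)` and the first Bianchi identity. -/
def HasCurvSym (A : V4 → V4 → V4 → V4 → ℝ) : Prop :=
  (∀ x y z w, A x y z w = - A y x z w) ∧
  (∀ x y z w, A x y z w = A z w x y) ∧
  (∀ x y z w, A x y z w + A y z x w + A z x y w = 0)

/-- An algebraic curvature tensor on `(V,⟨·,·⟩)`. -/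
def IsModel (A : V4 → V4 → V4 → V4 → ℝ) : Prop := IsMultilinear A ∧ HasCurvSym A

/-- The Jacobi operator `J_A(x)`, as a matrix: it is the unique linear map with
`⟨J_A(x)y, z⟩ = A(y,x,x,z)`; its matrix entries are `J i j = ε i * A(e j, x, x, e i)`. -/
def jacobi (A : V4 → V4 → V4 → V4 → ℝ) (x : V4) : Matrix (Fin 4) (Fin 4) ℝ :=
  Matrix.of fun i j => eps i * A (stdb j) x x (stdb i)

/-- Two endomorphisms of `V` are similar (conjugate by an invertible linear map). -/
def Similar4 (M N : Matrix (Fin 4) (Fin 4) ℝ) : Prop :=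
  ∃ L : Matrix (Fin 4) (Fin 4) ℝ, IsUnit L.det ∧ M * L = L * N

/-- Spacelike Osserman: the characteristic polynomial of `J_A` is constant on
unit spacelike vectors. -/
def SpacelikeOsserman (A : V4 → V4 → V4 → V4 → ℝ) : Prop :=
  ∀ u w : V4, nip u u = 1 → nip w w = 1 → (jacobi A u).charpoly = (jacobi A w).charpoly

/-- Timelike Osserman: the characteristic polynomial of `J_A` is constant on
unit timelike vectors. -/
def TimelikeOsserman (A : V4 → V4 → V4 → V4 → ℝ) : Prop :=
  ∀ u w : V4, nip u u = -1 → nip w w = -1 → (jacobi A u).charpoly = (jacobi A w).charpoly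

/-- Null Osserman: `J_A(v)` is nilpotent for every null vector `v`. -/
def NullOsserman (A : V4 → V4 → V4 → V4 → ℝ) : Prop :=
  ∀ v : V4, nip v v = 0 → IsNilpotent (jacobi A v)

/-- Spacelike Jordan Osserman: the Jordan normal form of `J_A` is constant on
unit spacelike vectors. -/
def SpacelikeJordanOsserman (A : V4 → V4 → V4 → V4 → ℝ) : Prop :=
  ∀ u w : V4, nip u u = 1 → nip w w = 1 → Similar4 (jacobi A u) (jacobi A w)

/-- Timelike Jordan Osserman. -/
def TimelikeJordanOsserman (A : V4 → V4 → V4 → V4 → ℝ) : Prop :=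
  ∀ u w : V4, nip u u = -1 → nip w w = -1 → Similar4 (jacobi A u) (jacobi A w)

/-- Null Jordan Osserman: the Jordan normal form of `J_A` is constant on
nonzero null vectors. -/
def NullJordanOsserman (A : V4 → V4 → V4 → V4 → ℝ) : Prop :=
  ∀ u w : V4, u ≠ 0 → w ≠ 0 → nip u u = 0 → nip w w = 0 →
    Similar4 (jacobi A u) (jacobi A w)

/-- The Ricci tensor `ρ_A(x,y) = Σᵢ εᵢ A(eᵢ,x,y,eᵢ)`. -/
def ricci (A : V4 → V4 → V4 → V4 → ℝ) (x y : V4) : ℝ :=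
  ∑ i : Fin 4, eps i * A (stdb i) x y (stdb i)

/-- Einstein: `ρ_A = c⟨·,·⟩`. -/
def Einstein (A : V4 → V4 → V4 → V4 → ℝ) : Prop :=
  ∃ c : ℝ, ∀ x y : V4, ricci A x y = c * nip x y

/-- The scalar curvature `τ_A = Σᵢ εᵢ ρ_A(eᵢ,eᵢ)`. -/
def scal (A : V4 → V4 → V4 → V4 → ℝ) : ℝ :=
  ∑ i : Fin 4, eps i * ricci A (stdb i) (stdb i)

/-- The Weyl tensor. -/
noncomputable def weyl (A : V4 → V4 → V4 → V4 → ℝ) (x y z v : V4) : ℝ :=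
  A x y z v + (scal A / 6) * (nip y z * nip x v - nip x z * nip y v)
    - (1/2) * (ricci A y z * nip x v - ricci A x z * nip y v
        + ricci A x v * nip y z - ricci A y v * nip x z)

/-- A 2-vector `x ∧ y`, represented by its antisymmetric coefficient matrix. -/
def wedge (x y : V4) : Matrix (Fin 4) (Fin 4) ℝ :=
  Matrix.of fun i j => x i * y j - x j * y i

/-- The Weyl tensor as a symmetric bilinear form on 2-vectors, determined by
`W_A(x∧y, z∧v) = W_A(x,y,z,v)`. -/
noncomputable def weylForm (A : V4 → V4 → V4 → V4 → ℝ) (α β : Matrix (Fin 4) (Fin 4) ℝ) : ℝ :=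
  (1/4) * ∑ i : Fin 4, ∑ j : Fin 4, ∑ k : Fin 4, ∑ l : Fin 4,
    α i j * β k l * weyl A (stdb i) (stdb j) (stdb k) (stdb l)

/-- `E₁^ε = (1/√2)(e₁∧e₂ + ε e₃∧e₄)`, `E₂^ε = (1/√2)(e₁∧e₃ + ε e₂∧e₄)`,
`E₃^ε = (1/√2)(e₁∧e₄ − ε e₂∧e₃)`.  For `ε = 1` this is the standard basis of the
self-dual 2-vectors `Λ⁺`; for `ε = −1`, of the anti-self-dual 2-vectors `Λ⁻`. -/
noncomputable def Evec (ε : ℝ) : Fin 3 → Matrix (Fin 4) (Fin 4) ℝ :=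
  ![(Real.sqrt 2)⁻¹ • (wedge (stdb 0) (stdb 1) + ε • wedge (stdb 2) (stdb 3)),
    (Real.sqrt 2)⁻¹ • (wedge (stdb 0) (stdb 2) + ε • wedge (stdb 1) (stdb 3)),
    (Real.sqrt 2)⁻¹ • (wedge (stdb 0) (stdb 3) - ε • wedge (stdb 1) (stdb 2))]

/-- The space `Λ⁺` of self-dual 2-vectors. -/
def LambdaPlus : Submodule ℝ (Matrix (Fin 4) (Fin 4) ℝ) :=
  Submodule.span ℝ (Set.range (Evec 1))

/-- The space `Λ⁻` of anti-self-dual 2-vectors. -/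
def LambdaMinus : Submodule ℝ (Matrix (Fin 4) (Fin 4) ℝ) :=
  Submodule.span ℝ (Set.range (Evec (-1)))

/-- Self-dual: the Weyl form vanishes identically on `Λ⁻`. -/
def SelfDual (A : V4 → V4 → V4 → V4 → ℝ) : Prop :=
  ∀ α ∈ LambdaMinus, ∀ β ∈ LambdaMinus, weylForm A α β = 0

/-- Anti-self-dual: the Weyl form vanishes identically on `Λ⁺`. -/
def AntiSelfDual (A : V4 → V4 → V4 → V4 → ℝ) : Prop :=
  ∀ α ∈ LambdaPlus, ∀ β ∈ LambdaPlus, weylForm A α β = 0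

/-- The curvature tensor `A⁰` of constant sectional curvature `+1`. -/
def Acurv0 (x y z v : V4) : ℝ := nip y z * nip x v - nip x z * nip y v

/-- The curvature tensor `A^Ψ` of a skew-adjoint endomorphism `Ψ`. -/
def AcurvPsi (Ψ : Matrix (Fin 4) (Fin 4) ℝ) (x y z v : V4) : ℝ :=
  nip (Ψ.mulVec y) z * nip (Ψ.mulVec x) v - nip (Ψ.mulVec x) z * nip (Ψ.mulVec y) v
    - 2 * nip (Ψ.mulVec x) y * nip (Ψ.mulVec z) v

/-- Skew-adjoint with respect to the neutral inner product. -/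
def SkewAdjointM (Ψ : Matrix (Fin 4) (Fin 4) ℝ) : Prop :=
  ∀ x y : V4, nip (Ψ.mulVec x) y = - nip x (Ψ.mulVec y)

/-- An orthogonal complex structure: skew-adjoint with `J² = −id`. -/
def OrthComplexStructure (J : Matrix (Fin 4) (Fin 4) ℝ) : Prop :=
  SkewAdjointM J ∧ J * J = -1

/-- An adapted paracomplex structure: skew-adjoint with `P² = id`. -/
def AdaptedParaStructure (P : Matrix (Fin 4) (Fin 4) ℝ) : Prop :=
  SkewAdjointM P ∧ P * P = 1

/-- A paraquaternionic structure. -/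
def Paraquaternionic (P₁ P₂ P₃ : Matrix (Fin 4) (Fin 4) ℝ) : Prop :=
  SkewAdjointM P₁ ∧ SkewAdjointM P₂ ∧ SkewAdjointM P₃ ∧
  P₁ * P₁ = -1 ∧ P₂ * P₂ = 1 ∧ P₃ * P₃ = 1 ∧
  P₁ * P₂ + P₂ * P₁ = 0 ∧ P₁ * P₃ + P₃ * P₁ = 0 ∧ P₂ * P₃ + P₃ * P₂ = 0

/-- The standard paraquaternionic structure: `Ψ₁`. -/
def psi1 : Matrix (Fin 4) (Fin 4) ℝ :=
  !![0, 1, 0, 0; -1, 0, 0, 0; 0, 0, 0, -1; 0, 0, 1, 0]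

/-- The standard paraquaternionic structure: `Ψ₂`. -/
def psi2 : Matrix (Fin 4) (Fin 4) ℝ :=
  !![0, 0, 1, 0; 0, 0, 0, 1; 1, 0, 0, 0; 0, 1, 0, 0]

/-- The standard paraquaternionic structure: `Ψ₃`. -/
def psi3 : Matrix (Fin 4) (Fin 4) ℝ :=
  !![0, 0, 0, 1; 0, 0, -1, 0; 0, -1, 0, 0; 1, 0, 0, 0]

/-- The curvature tensor `A_{κ₀,ξ}` of the Gilkey–Ivanova ansatz. -/
noncomputable def AKxi (κ₀ ξ11 ξ12 ξ13 ξ22 ξ23 ξ33 : ℝ) : V4 → V4 → V4 → V4 → ℝ :=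
  fun x y z w =>
    κ₀ * Acurv0 x y z w + (1/3) *
      (ξ11 * AcurvPsi psi1 x y z w + ξ22 * AcurvPsi psi2 x y z w
        + ξ33 * AcurvPsi psi3 x y z w + ξ12 * AcurvPsi (psi1 + psi2) x y z w
        + ξ13 * AcurvPsi (psi1 + psi3) x y z w + ξ23 * AcurvPsi (psi2 + psi3) x y z w)

/-- The `3 × 3` matrix `𝒥_{κ₀,ξ}`. -/
def Jmat (κ₀ ξ11 ξ12 ξ13 ξ22 ξ23 ξ33 : ℝ) : Matrix (Fin 3) (Fin 3) ℝ :=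
  κ₀ • (1 : Matrix (Fin 3) (Fin 3) ℝ) +
    !![ξ11 + ξ12 + ξ13, -ξ12, -ξ13;
       ξ12, -ξ22 - ξ12 - ξ23, -ξ23;
       ξ13, -ξ23, -ξ33 - ξ13 - ξ23]

/-- An oriented orthonormal basis of `(V,⟨·,·⟩)`: `b₁, b₂` timelike, `b₃, b₄` spacelike,
mutually orthogonal, with positively-oriented change-of-basis matrix. -/
def OrientedONB (b : Fin 4 → V4) : Prop :=
  (∀ i j : Fin 4, nip (b i) (b j) = if i = j then eps i else 0) ∧
  0 < (Matrix.of fun i j : Fin 4 => b j i).det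


open Polynomial in
lemma charpoly_conj_eq {n : ℕ} (M P N : Matrix (Fin n) (Fin n) ℂ)
    (hP : IsUnit P.det) (hMN : M * P = P * N) : M.charpoly = N.charpoly := by
  have key : charmatrix M * C.mapMatrix P = C.mapMatrix P * charmatrix N := by
    rw [charmatrix, charmatrix, sub_mul, mul_sub,
      (Matrix.scalar_commute (X : ℂ[X]) (Commute.all X) (C.mapMatrix P)).eq]
    congr 1
    rw [← _root_.map_mul, ← _root_.map_mul, hMN]
  have hdet := congrArg Matrix.det key
  rw [Matrix.det_mul, Matrix.det_mul, ← RingHom.map_det] at hdet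
  have hC : (C P.det : ℂ[X]) ≠ 0 := fun hc => hP.ne_zero (by simpa using hc)
  rw [mul_comm (C P.det) N.charmatrix.det] at hdet
  exact mul_right_cancel₀ hC hdet

set_option maxHeartbeats 1000000 in
open Polynomial in
lemma trace_pow_eq_sum_pow_roots : ∀ (n : ℕ) (M : Matrix (Fin n) (Fin n) ℂ) (j : ℕ),
    Matrix.trace (M ^ j) = ((M.charpoly.roots).map (· ^ j)).sum := by
  intro n
  induction n with
  | zero =>
    intro M j
    have h1 : M.charpoly = 1 := by
      have := M.charpoly_monic
      have hd : M.charpoly.natDegree = 0 := by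
        simpa using M.charpoly_natDegree_eq_dim
      exact this.natDegree_eq_zero.mp hd ▸ rfl
    simp [h1, Matrix.trace]
  | succ n ih =>
    intro M j
    -- find an eigenvalue
    have hdeg : M.charpoly.degree ≠ 0 := by
      have hd : M.charpoly.degree = ((n+1 : ℕ) : WithBot ℕ) := by
        rw [M.charpoly_degree_eq_dim]; simp
      rw [hd]
      exact_mod_cast Nat.succ_ne_zero n
    obtain ⟨lam, hlam⟩ := Complex.isAlgClosed.exists_root M.charpoly hdeg
    -- eigenvector
    have hdet0 : (lam • (1 : Matrix (Fin (n+1)) (Fin (n+1)) ℂ) - M).det = 0 := by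
      have hmap : (charmatrix M).map (Polynomial.eval lam) =
          lam • (1 : Matrix (Fin (n+1)) (Fin (n+1)) ℂ) - M := by
        ext i k
        by_cases hik : i = k
        · subst hik
          simp [charmatrix_apply_eq, Matrix.smul_apply, Matrix.one_apply]
        · simp [charmatrix_apply_ne _ _ _ hik, Matrix.smul_apply, Matrix.one_apply, hik]
      have hh : Polynomial.eval lam (M.charmatrix.det)
          = ((charmatrix M).map (Polynomial.eval lam)).det := by
        have := (Polynomial.evalRingHom lam).map_det (charmatrix M)
        simpa [RingHom.mapMatrix_apply, Polynomial.coe_evalRingHom] using this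
      rw [← hmap, ← hh]
      simpa [Matrix.charpoly] using hlam
    obtain ⟨v, hv0, hvz⟩ := (Matrix.exists_mulVec_eq_zero_iff).mpr hdet0
    have hev : M.mulVec v = lam • v := by
      have h2 : (lam • (1:Matrix (Fin (n+1)) (Fin (n+1)) ℂ) - M).mulVec v
          = lam • v - M.mulVec v := by
        rw [Matrix.sub_mulVec, Matrix.smul_mulVec, Matrix.one_mulVec]
      rw [h2] at hvz
      linear_combination (norm := module) -hvz
    -- index where v is nonzero
    obtain ⟨jj, hjj⟩ : ∃ jj, v jj ≠ 0 := Function.ne_iff.mp hv0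
    -- invertible P with column 0 equal to v
    set σ : Equiv.Perm (Fin (n+1)) := Equiv.swap 0 jj with hσ
    set P : Matrix (Fin (n+1)) (Fin (n+1)) ℂ :=
      ((1 : Matrix (Fin (n+1)) (Fin (n+1)) ℂ).updateCol jj v) * σ.permMatrix ℂ with hP
    have hPcol : ∀ i, P i 0 = v i := by
      intro i
      rw [hP, Matrix.mul_apply]
      rw [Finset.sum_eq_single jj]
      · simp [Equiv.Perm.permMatrix, PEquiv.toMatrix_apply, Equiv.toPEquiv_apply, hσ,
          Matrix.updateCol_apply, Equiv.swap_apply_right]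
      · intro b _ hb
        have hbz : ¬ (σ b = 0) := by
          rw [hσ]
          intro hc
          apply hb
          have h0 : (Equiv.swap 0 jj) b = (Equiv.swap 0 jj) jj := by
            rw [Equiv.swap_apply_right]; simpa [hσ] using hc
          exact (Equiv.swap 0 jj).injective h0
        simp [Equiv.Perm.permMatrix, PEquiv.toMatrix_apply, Equiv.toPEquiv_apply, hbz]
      · simp
    have hPdet : IsUnit P.det := by
      rw [hP, Matrix.det_mul, Matrix.det_permutation]
      have h1 : ((1 : Matrix (Fin (n+1)) (Fin (n+1)) ℂ).updateCol jj v).det = v jj := by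
        rw [← Matrix.cramer_apply, Matrix.cramer_one]
        rfl
      rw [h1]
      apply IsUnit.mul (isUnit_iff_ne_zero.mpr hjj)
      rcases Int.units_eq_one_or (Equiv.Perm.sign σ) with hs | hs <;> simp [hs]
    obtain ⟨u, hu⟩ := (Matrix.isUnit_iff_isUnit_det P).mpr hPdet
    set N : Matrix (Fin (n+1)) (Fin (n+1)) ℂ :=
      (↑u⁻¹ : Matrix (Fin (n+1)) (Fin (n+1)) ℂ) * M * (↑u : Matrix (Fin (n+1)) (Fin (n+1)) ℂ)
      with hN
    have hMP : M * P = P * N := by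
      rw [hN, ← hu, ← mul_assoc, ← mul_assoc, Units.mul_inv, one_mul]
    have htr : ∀ k : ℕ, Matrix.trace (N ^ k) = Matrix.trace (M ^ k) := by
      intro k
      rw [hN, Units.conj_pow', Matrix.trace_mul_comm, ← mul_assoc, Units.mul_inv, one_mul]
    have hchar : M.charpoly = N.charpoly := charpoly_conj_eq M P N hPdet hMP
    -- first column of N
    have hNcol : ∀ i, N i 0 = if i = 0 then lam else 0 := by
      have hinj : Function.Injective (P.mulVec) :=
        Matrix.mulVec_injective_iff_isUnit.mpr ((Matrix.isUnit_iff_isUnit_det P).mpr hPdet)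
      have hcols : P.mulVec (fun i => N i 0) = P.mulVec (fun i => if i = 0 then lam else 0) := by
        funext i
        have lhs : P.mulVec (fun i => N i 0) i = (P * N) i 0 := by
          simp [Matrix.mulVec, Matrix.mul_apply, dotProduct]
        have rhs2 : (M * P) i 0 = lam * v i := by
          have h3 : (M * P) i 0 = M.mulVec v i := by
            simp only [Matrix.mul_apply, Matrix.mulVec, dotProduct]
            exact Finset.sum_congr rfl fun k _ => by rw [hPcol k]
          rw [h3, hev]
          simp
        rw [lhs, ← hMP, rhs2]
        simp only [Matrix.mulVec, dotProduct, mul_ite, mul_zero, mul_one]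
        rw [Finset.sum_eq_single 0] <;> simp +contextual [hPcol, mul_comm]
      have hcc := hinj hcols
      intro i; exact congrFun hcc i
    -- block structure
    set B : Matrix (Fin n) (Fin n) ℂ := Matrix.of (fun i k => N i.succ k.succ) with hB
    have hblock : ∀ k : ℕ,
        (∀ i, (N ^ k) i 0 = if i = 0 then lam ^ k else 0) ∧
        (∀ i l : Fin n, (N ^ k) i.succ l.succ = (B ^ k) i l) := by
      intro k
      induction k with
      | zero =>
        constructor
        · intro i
          simp [Matrix.one_apply, eq_comm]
        · intro i l
          simp only [pow_zero, Matrix.one_apply]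
          by_cases hil : i = l
          · simp [hil]
          · simp [hil, fun hc => hil (Fin.succ_injective n hc)]
      | succ k ihk =>
        constructor
        · intro i
          rw [pow_succ, Matrix.mul_apply]
          rw [Finset.sum_eq_single 0]
          · rw [ihk.1 i, hNcol 0]
            by_cases hi : i = 0 <;> simp [hi, pow_succ]
          · intro b _ hb
            rw [hNcol b, if_neg hb, mul_zero]
          · simp
        · intro i l
          rw [pow_succ, pow_succ, Matrix.mul_apply, Matrix.mul_apply]
          rw [Fin.sum_univ_succ]
          rw [ihk.1 i.succ]
          simp only [Fin.succ_ne_zero i, if_false, zero_mul, zero_add]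
          refine Finset.sum_congr rfl fun c _ => ?_
          rw [ihk.2 i c]
          rfl
    -- trace of N^j
    have htrN : Matrix.trace (N ^ j) = lam ^ j + Matrix.trace (B ^ j) := by
      rw [Matrix.trace, Matrix.trace]
      simp only [Matrix.diag_apply]
      rw [Fin.sum_univ_succ]
      rw [(hblock j).1 0, if_pos rfl]
      congr 1
      exact Finset.sum_congr rfl fun i _ => (hblock j).2 i i
    -- charpoly factorization
    have hcharN : N.charpoly = (X - C lam) * B.charpoly := by
      rw [Matrix.charpoly, Matrix.det_succ_column_zero]
      rw [Finset.sum_eq_single 0]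
      · have hsub : (charmatrix N).submatrix (0 : Fin (n+1)).succAbove Fin.succ
            = charmatrix B := by
          rw [Fin.succAbove_zero]
          ext i l
          simp only [Matrix.submatrix_apply]
          by_cases hil : i = l
          · subst hil
            rw [charmatrix_apply_eq, charmatrix_apply_eq]
            rfl
          · have hs : i.succ ≠ l.succ := fun hc => hil (Fin.succ_injective n hc)
            rw [charmatrix_apply_ne _ _ _ hs, charmatrix_apply_ne _ _ _ hil]
            rfl
        rw [hsub, charmatrix_apply_eq, hNcol 0, if_pos rfl]
        show ((-1 : ℂ[X]) ^ ((0 : Fin (n+1)) : ℕ)) * (X - C lam) * B.charpoly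
          = (X - C lam) * B.charpoly
        simp
      · intro b _ hb
        have : charmatrix N b 0 = 0 := by
          rw [charmatrix_apply_ne _ _ _ hb, hNcol b, if_neg hb]
          simp
        rw [this]
        ring
      · simp
    -- conclude
    rw [← htr j, htrN, ih B j, hchar, hcharN]
    have hBne : B.charpoly ≠ 0 := B.charpoly_monic.ne_zero
    rw [Polynomial.roots_mul (mul_ne_zero (Polynomial.X_sub_C_ne_zero lam) hBne),
      Polynomial.roots_X_sub_C]
    rw [Multiset.map_add, Multiset.sum_add, Multiset.map_singleton, Multiset.sum_singleton]


lemma trace_pow_eq_of_charpoly_eq {n : ℕ} (M N : Matrix (Fin n) (Fin n) ℝ)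
    (h : M.charpoly = N.charpoly) (j : ℕ) :
    Matrix.trace (M ^ j) = Matrix.trace (N ^ j) := by
  have key : ∀ Q : Matrix (Fin n) (Fin n) ℝ,
      (Complex.ofRealHom (Matrix.trace (Q ^ j)) : ℂ)
        = ((Q.charpoly.map Complex.ofRealHom).roots.map (· ^ j)).sum := by
    intro Q
    have h1 : (Complex.ofRealHom.mapMatrix Q) ^ j = Complex.ofRealHom.mapMatrix (Q ^ j) :=
      (map_pow Complex.ofRealHom.mapMatrix Q j).symm
    have h2 : Matrix.trace ((Complex.ofRealHom.mapMatrix Q) ^ j)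
        = Complex.ofRealHom (Matrix.trace (Q ^ j)) := by
      rw [h1, RingHom.mapMatrix_apply, Matrix.trace, Matrix.trace, map_sum]
      rfl
    rw [← h2, trace_pow_eq_sum_pow_roots n (Complex.ofRealHom.mapMatrix Q) j,
      RingHom.mapMatrix_apply, Matrix.charpoly_map]
  have := (key M).trans ((h ▸ rfl : M.charpoly.map Complex.ofRealHom
      = N.charpoly.map Complex.ofRealHom) ▸ (key N).symm)
  have h3 := congrArg Complex.re this
  simpa using h3


section ModelAux

variable {A : V4 → V4 → V4 → V4 → ℝ}

lemma ml_zero2 (hm : IsMultilinear A) (x z w : V4) : A x 0 z w = 0 := by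
  have := hm.2.1 1 x 0 0 z w
  simp only [one_smul, add_zero, one_mul] at this
  linarith

lemma ml_zero3 (hm : IsMultilinear A) (x y w : V4) : A x y 0 w = 0 := by
  have := hm.2.2.1 1 x y 0 0 w
  simp only [one_smul, add_zero, one_mul] at this
  linarith

lemma ml_smul2 (hm : IsMultilinear A) (c : ℝ) (x y z w : V4) :
    A x (c • y) z w = c * A x y z w := by
  have := hm.2.1 c x y 0 z w
  simpa [ml_zero2 hm] using this

lemma ml_smul3 (hm : IsMultilinear A) (c : ℝ) (x y z w : V4) :
    A x y (c • z) w = c * A x y z w := by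
  have := hm.2.2.1 c x y z 0 w
  simpa [ml_zero3 hm] using this

lemma ml_add2 (hm : IsMultilinear A) (x y y' z w : V4) :
    A x (y + y') z w = A x y z w + A x y' z w := by
  have := hm.2.1 1 x y y' z w
  simpa using this

lemma ml_add3 (hm : IsMultilinear A) (x y z z' w : V4) :
    A x y (z + z') w = A x y z w + A x y z' w := by
  have := hm.2.2.1 1 x y z z' w
  simpa using this

lemma ml_sum2 (hm : IsMultilinear A) {α : Type*} (s : Finset α) (g : α → V4) (x z w : V4) :
    A x (∑ a ∈ s, g a) z w = ∑ a ∈ s, A x (g a) z w := by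
  classical
  induction s using Finset.cons_induction with
  | empty => simpa using ml_zero2 hm x z w
  | cons a s ha ih =>
    rw [Finset.sum_cons, Finset.sum_cons, ml_add2 hm, ih]

lemma ml_sum3 (hm : IsMultilinear A) {α : Type*} (s : Finset α) (g : α → V4) (x y w : V4) :
    A x y (∑ a ∈ s, g a) w = ∑ a ∈ s, A x y (g a) w := by
  classical
  induction s using Finset.cons_induction with
  | empty => simpa using ml_zero3 hm x y w
  | cons a s ha ih =>
    rw [Finset.sum_cons, Finset.sum_cons, ml_add3 hm, ih]

lemma v4_decomp (v : V4) : v = ∑ a : Fin 4, v a • stdb a := by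
  funext i
  rw [Finset.sum_apply]
  simp only [Pi.smul_apply, stdb, smul_eq_mul, mul_ite, mul_one, mul_zero]
  rw [Finset.sum_ite_eq Finset.univ i v]
  simp

lemma ml_expand2 (hm : IsMultilinear A) (v x z w : V4) :
    A x v z w = ∑ a : Fin 4, v a * A x (stdb a) z w := by
  conv_lhs => rw [v4_decomp v]
  rw [ml_sum2 hm]
  exact Finset.sum_congr rfl fun a _ => ml_smul2 hm (v a) x (stdb a) z w

lemma ml_expand3 (hm : IsMultilinear A) (v x y w : V4) :
    A x y v w = ∑ b : Fin 4, v b * A x y (stdb b) w := by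
  conv_lhs => rw [v4_decomp v]
  rw [ml_sum3 hm]
  exact Finset.sum_congr rfl fun b _ => ml_smul3 hm (v b) x y (stdb b) w

lemma jacobi_entry (hm : IsMultilinear A) (v : V4) (i k : Fin 4) :
    jacobi A v i k = eps i * ∑ a : Fin 4, v a *
      ∑ b : Fin 4, v b * A (stdb k) (stdb a) (stdb b) (stdb i) := by
  show eps i * A (stdb k) v v (stdb i) = _
  rw [ml_expand2 hm v (stdb k) v (stdb i)]
  congr 1
  exact Finset.sum_congr rfl fun a _ => by rw [ml_expand3 hm v (stdb k) (stdb a) (stdb i)]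

lemma jacobi_smul (hm : IsMultilinear A) (t : ℝ) (v : V4) :
    jacobi A (t • v) = (t * t) • jacobi A v := by
  ext i k
  show eps i * A (stdb k) (t • v) (t • v) (stdb i)
    = (t * t) * (eps i * A (stdb k) v v (stdb i))
  rw [ml_smul2 hm, ml_smul3 hm]
  ring

lemma nip_smul_self (t : ℝ) (v : V4) : nip (t • v) (t • v) = t ^ 2 * nip v v := by
  simp only [nip, Pi.smul_apply, smul_eq_mul]
  ring

lemma nip_stdb2 : nip (stdb 2) (stdb 2) = 1 := by
  simp [nip, stdb]

lemma proj_analytic (a : Fin 4) : AnalyticOnNhd ℝ (fun v : V4 => v a) Set.univ :=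
  fun x _ => (ContinuousLinearMap.proj a : V4 →L[ℝ] ℝ).analyticAt x

lemma jacobi_entry_analytic (hm : IsMultilinear A) (i k : Fin 4) :
    AnalyticOnNhd ℝ (fun v : V4 => jacobi A v i k) Set.univ := by
  have : (fun v : V4 => jacobi A v i k) = fun v : V4 => eps i * ∑ a : Fin 4, v a *
      ∑ b : Fin 4, v b * A (stdb k) (stdb a) (stdb b) (stdb i) := by
    funext v; exact jacobi_entry hm v i k
  rw [this]
  apply AnalyticOnNhd.mul analyticOnNhd_const
  apply Finset.analyticOnNhd_fun_sum
  intro a _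
  apply AnalyticOnNhd.mul (proj_analytic a)
  apply Finset.analyticOnNhd_fun_sum
  intro b _
  exact AnalyticOnNhd.mul (proj_analytic b) analyticOnNhd_const

lemma jacobi_pow_entry_analytic (hm : IsMultilinear A) (m : ℕ) (i k : Fin 4) :
    AnalyticOnNhd ℝ (fun v : V4 => ((jacobi A v) ^ m) i k) Set.univ := by
  induction m generalizing i k with
  | zero =>
    simp only [pow_zero]
    exact analyticOnNhd_const
  | succ m ihm =>
    have : (fun v : V4 => ((jacobi A v) ^ (m+1)) i k)
        = fun v : V4 => ∑ l : Fin 4, ((jacobi A v) ^ m) i l * jacobi A v l k := by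
      funext v
      rw [pow_succ, Matrix.mul_apply]
    rw [this]
    exact Finset.analyticOnNhd_fun_sum _ fun l _ =>
      AnalyticOnNhd.mul (ihm i l) (jacobi_entry_analytic hm l k)

lemma nip_self_analytic : AnalyticOnNhd ℝ (fun v : V4 => nip v v) Set.univ := by
  have : (fun v : V4 => nip v v)
      = fun v : V4 => -(v 0 * v 0) - v 1 * v 1 + v 2 * v 2 + v 3 * v 3 := rfl
  rw [this]
  apply AnalyticOnNhd.add
  apply AnalyticOnNhd.add
  apply AnalyticOnNhd.sub
  · exact ((proj_analytic 0).mul (proj_analytic 0)).neg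
  · exact (proj_analytic 1).mul (proj_analytic 1)
  · exact (proj_analytic 2).mul (proj_analytic 2)
  · exact (proj_analytic 3).mul (proj_analytic 3)

lemma nip_self_continuous : Continuous (fun v : V4 => nip v v) := by
  simp only [nip]
  fun_prop

end ModelAux

/-- For a spacelike Osserman model, `Tr(J_A(v)^j) = c_j ⟨v,v⟩^j` for all `v`;
in particular the traces of powers of the Jacobi operator vanish on null vectors. -/
theorem trace_jacobi_power_eq (A : V4 → V4 → V4 → V4 → ℝ)
    (hA : IsModel A) (h : SpacelikeOsserman A) :
    ∀ j : ℕ, 0 < j → ∃ c : ℝ,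
      (∀ v : V4, Matrix.trace ((jacobi A v) ^ j) = c * (nip v v) ^ j) ∧
      (∀ v : V4, nip v v = 0 → Matrix.trace ((jacobi A v) ^ j) = 0) := by
  intro j hj
  obtain ⟨hm, _hsym⟩ := hA
  set c : ℝ := Matrix.trace ((jacobi A (stdb 2)) ^ j) with hc
  -- on spacelike vectors
  have hspace : ∀ v : V4, 0 < nip v v →
      Matrix.trace ((jacobi A v) ^ j) = c * (nip v v) ^ j := by
    intro v hv
    set s : ℝ := nip v v with hs
    have hsne : Real.sqrt s ≠ 0 := ne_of_gt (Real.sqrt_pos.mpr hv)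
    set u : V4 := (Real.sqrt s)⁻¹ • v with hu
    have hnu : nip u u = 1 := by
      rw [hu, nip_smul_self, ← hs]
      rw [inv_pow, Real.sq_sqrt hv.le]
      exact inv_mul_cancel₀ (ne_of_gt hv)
    have hvu : v = Real.sqrt s • u := by
      rw [hu, smul_smul, mul_inv_cancel₀ hsne, one_smul]
    have hJ : jacobi A v = s • jacobi A u := by
      rw [hvu, jacobi_smul hm, Real.mul_self_sqrt hv.le]
    have hcp : (jacobi A u).charpoly = (jacobi A (stdb 2)).charpoly :=
      h u (stdb 2) hnu nip_stdb2
    have htru : Matrix.trace ((jacobi A u) ^ j) = c :=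
      trace_pow_eq_of_charpoly_eq _ _ hcp j
    rw [hJ, smul_pow, Matrix.trace_smul, smul_eq_mul, htru]
    ring
  -- analytic continuation to all vectors
  have hall : ∀ v : V4, Matrix.trace ((jacobi A v) ^ j) = c * (nip v v) ^ j := by
    set g : V4 → ℝ :=
      fun v => Matrix.trace ((jacobi A v) ^ j) - c * (nip v v) ^ j with hg
    have hganal : AnalyticOnNhd ℝ g Set.univ := by
      apply AnalyticOnNhd.sub
      · have : (fun v : V4 => Matrix.trace ((jacobi A v) ^ j))
            = fun v : V4 => ∑ i : Fin 4, ((jacobi A v) ^ j) i i := rfl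
        rw [this]
        exact Finset.analyticOnNhd_fun_sum _ fun i _ => jacobi_pow_entry_analytic hm j i i
      · exact AnalyticOnNhd.mul analyticOnNhd_const (nip_self_analytic.pow j)
    have hopen : IsOpen {v : V4 | 0 < nip v v} :=
      isOpen_lt continuous_const nip_self_continuous
    have hmem : stdb 2 ∈ {v : V4 | 0 < nip v v} := by
      simp only [Set.mem_setOf_eq, nip_stdb2]
      norm_num
    have hev : g =ᶠ[nhds (stdb 2)] 0 := by
      filter_upwards [hopen.mem_nhds hmem] with v hv
      simp only [Pi.zero_apply, hg]
      rw [hspace v hv]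
      ring
    have hzero : Set.EqOn g 0 Set.univ :=
      hganal.eqOn_zero_of_preconnected_of_eventuallyEq_zero
        isPreconnected_univ (Set.mem_univ (stdb 2)) hev
    intro v
    have := hzero (Set.mem_univ v)
    simp only [hg, Pi.zero_apply] at this
    linarith
  refine ⟨c, hall, fun v hv => ?_⟩
  rw [hall v, hv, zero_pow hj.ne', mul_zero]
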